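/- arXiv:1103.0154 — 5 statements merged into one kernel-verified Lean document; each statement's English description precedes it below -/
import Mathlib

section
/- Let T = (A₁;…;A_p) be an l×n×p real tensor with columns A_i = (a_{i1},…,a_{in}), and define the l×p×n tensor T' = (B₁;…;B_n) where B_j = (a_{pj}, a_{p-1,j}, …, a_{1j}). Then T is absolutely full column rank if and only if T' is absolutely full column rank. In particular, an l×n×p AFR tensor exists if and only if an l×p×n AFR tensor exists. -/
open Matrix BigOperators

/-- An `l × n × p` real tensor (a `p`-tuple of `l × n` slices, with row index type `ι`
and column index type `κ`) is absolutely full column rank (AFR) if every nontrivial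
linear combination of the slices has full column rank. -/
def IsAFR {ι κ : Type*} [Fintype ι] [Fintype κ] {p : ℕ}
    (T : Fin p → Matrix ι κ ℝ) : Prop :=
  ∀ x : Fin p → ℝ, x ≠ 0 → (∑ k, x k • T k).rank = Fintype.card κ

lemma rank_eq_card_iff {ι κ : Type*} [Fintype ι] [Fintype κ] (M : Matrix ι κ ℝ) :
    M.rank = Fintype.card κ ↔ ∀ y : κ → ℝ, y ≠ 0 → M *ᵥ y ≠ 0 := by
  have hrn : M.rank + Module.finrank ℝ (LinearMap.ker M.mulVecLin) = Fintype.card κ := by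
    have := M.mulVecLin.finrank_range_add_finrank_ker
    rwa [Module.finrank_pi] at this
  constructor
  · intro h y hy hMy
    have hk : Module.finrank ℝ (LinearMap.ker M.mulVecLin) = 0 := by omega
    rw [Submodule.finrank_eq_zero] at hk
    have : y ∈ LinearMap.ker M.mulVecLin := by
      simpa [Matrix.mulVecLin] using hMy
    rw [hk] at this
    exact hy (by simpa using this)
  · intro h
    have hk : LinearMap.ker M.mulVecLin = ⊥ := by
      rw [LinearMap.ker_eq_bot']
      intro y hy
      by_contra hy0
      exact h y hy0 (by simpa [Matrix.mulVecLin] using hy)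
    have h0 : Module.finrank ℝ (LinearMap.ker M.mulVecLin) = 0 := by rw [hk]; simp
    omega

lemma isAFR_iff_bilin {l n p : ℕ} (T : Fin p → Matrix (Fin l) (Fin n) ℝ) :
    IsAFR T ↔ ∀ x : Fin p → ℝ, x ≠ 0 → ∀ y : Fin n → ℝ, y ≠ 0 →
      (fun r : Fin l => ∑ k, ∑ j, x k * (T k r j * y j)) ≠ 0 := by
  unfold IsAFR
  refine forall_congr' fun x => forall_congr' fun hx => ?_
  have hc := rank_eq_card_iff (∑ k, x k • T k)
  rw [Fintype.card_fin] at hc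
  rw [Fintype.card_fin, hc]
  refine forall_congr' fun y => forall_congr' fun hy => ?_
  have hmv : (∑ k, x k • T k) *ᵥ y = fun r => ∑ k, ∑ j, x k * (T k r j * y j) := by
    funext r
    simp only [Matrix.mulVec, dotProduct, Matrix.sum_apply, Matrix.smul_apply,
      smul_eq_mul, Finset.sum_mul]
    rw [Finset.sum_comm]
    exact Finset.sum_congr rfl fun k _ => Finset.sum_congr rfl fun j _ => by ring
  rw [hmv]

lemma rev_ne_zero {p : ℕ} {x : Fin p → ℝ} (hx : x ≠ 0) : (fun k : Fin p => x k.rev) ≠ 0 := by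
  intro h
  apply hx
  funext i
  have := congrFun h i.rev
  simpa using this

lemma key_sum {l n p : ℕ} (T : Fin p → Matrix (Fin l) (Fin n) ℝ)
    (x : Fin p → ℝ) (y : Fin n → ℝ) (r : Fin l) :
    (∑ j : Fin n, ∑ i : Fin p, y j * (T i.rev r j * x i)) =
      ∑ k : Fin p, ∑ j : Fin n, x k.rev * (T k r j * y j) := by
  rw [Finset.sum_comm]
  exact Fintype.sum_equiv Fin.revPerm _ _ fun i =>
    Finset.sum_congr rfl fun j _ => by simp [Fin.rev_rev]; ring

lemma main_iff {l n p : ℕ} (T : Fin p → Matrix (Fin l) (Fin n) ℝ) :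
    IsAFR T ↔
      IsAFR (fun j : Fin n => Matrix.of fun (r : Fin l) (i : Fin p) => T i.rev r j) := by
  rw [isAFR_iff_bilin, isAFR_iff_bilin]
  constructor
  · intro hT y hy x hx
    have := hT _ (rev_ne_zero hx) y hy
    intro h0
    apply this
    funext r
    have h0r := congrFun h0 r
    simp only [Matrix.of_apply, Pi.zero_apply] at h0r ⊢
    rw [← key_sum]
    exact h0r
  · intro hT' x hx y hy
    have := hT' y hy _ (rev_ne_zero hx)
    intro h0
    apply this
    funext r
    have h0r := congrFun h0 r
    simp only [Matrix.of_apply, Pi.zero_apply] at h0r ⊢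
    rw [key_sum]
    simpa [Fin.rev_rev] using h0r

theorem afr_rotate {l n p : ℕ} (T : Fin p → Matrix (Fin l) (Fin n) ℝ) :
    (IsAFR T ↔
      IsAFR (fun j : Fin n => Matrix.of fun (r : Fin l) (i : Fin p) => T i.rev r j)) ∧
    ((∃ S : Fin p → Matrix (Fin l) (Fin n) ℝ, IsAFR S) ↔
      (∃ S' : Fin n → Matrix (Fin l) (Fin p) ℝ, IsAFR S')) := by
  refine ⟨main_iff T, ?_, ?_⟩
  · rintro ⟨S, hS⟩
    exact ⟨_, (main_iff S).mp hS⟩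
  · rintro ⟨S', hS'⟩
    exact ⟨_, (main_iff S').mp hS'⟩
end

section
/- For positive integers l, n, p, the set of absolutely full column rank tensors is an open subset of ℝ^{l×n×p} in the Euclidean topology. -/
open Matrix BigOperators

lemma rank_smul_eq {l n : ℕ} (c : ℝ) (hc : c ≠ 0) (A : Matrix (Fin l) (Fin n) ℝ) :
    (c • A).rank = A.rank := by
  have h : c • A = (c • (1 : Matrix (Fin l) (Fin l) ℝ)) * A := by
    rw [Matrix.smul_mul, Matrix.one_mul]
  rw [h, Matrix.rank_mul_eq_right_of_isUnit_det]
  simp only [Matrix.det_smul, Matrix.det_one, mul_one]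
  exact (pow_ne_zero _ hc).isUnit

lemma rank_eq_iff_det_ne_zero {l n : ℕ} (A : Matrix (Fin l) (Fin n) ℝ) :
    A.rank = n ↔ (Aᵀ * A).det ≠ 0 := by
  constructor
  · intro h hdet
    obtain ⟨v, hv, hmv⟩ := (Matrix.exists_mulVec_eq_zero_iff).2 hdet
    have hker : v ∈ LinearMap.ker (Aᵀ * A).mulVecLin := by
      rw [LinearMap.mem_ker, Matrix.mulVecLin_apply]
      exact hmv
    rw [Matrix.ker_mulVecLin_transpose_mul_self] at hker
    have hrank := Matrix.rank_transpose_mul_self A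
    -- rank-nullity for A.mulVecLin : (Fin n → ℝ) →ₗ (Fin l → ℝ)
    have hrn := LinearMap.finrank_range_add_finrank_ker A.mulVecLin
    have hkpos : 0 < Module.finrank ℝ (LinearMap.ker A.mulVecLin) := by
      have hne : (⟨v, hker⟩ : LinearMap.ker A.mulVecLin) ≠ 0 := by
        simp [Subtype.ext_iff, hv]
      exact Module.finrank_pos_iff.2 (nontrivial_of_ne _ _ hne)
    have : A.rank + Module.finrank ℝ (LinearMap.ker A.mulVecLin) = n := by
      simpa [Matrix.rank, Module.finrank_pi] using hrn
    omega
  · intro hdet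
    have := Matrix.rank_of_isUnit (Aᵀ * A) ((Matrix.isUnit_iff_isUnit_det _).2 hdet.isUnit)
    rw [Matrix.rank_transpose_mul_self] at this
    simpa using this

lemma isOpen_forall_ne {X Y : Type*} [TopologicalSpace X] [TopologicalSpace Y]
    {K : Set Y} (hK : IsCompact K) {f : X × Y → ℝ} (hf : Continuous f) :
    IsOpen {x : X | ∀ y ∈ K, f (x, y) ≠ 0} := by
  rw [isOpen_iff_mem_nhds]
  intro x hx
  have hU : IsOpen {q : X × Y | f q ≠ 0} := isOpen_ne.preimage hf
  have hsub : Set.singleton x ×ˢ K ⊆ {q : X × Y | f q ≠ 0} := by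
    rintro ⟨a, b⟩ ⟨ha, hb⟩
    rcases ha with rfl
    exact hx b hb
  obtain ⟨u, v, hu, hv, hxu, hKv, huv⟩ :=
    generalized_tube_lemma isCompact_singleton hK hU hsub
  exact Filter.mem_of_superset (hu.mem_nhds (hxu rfl))
    (fun a ha y hy => huv ⟨ha, hKv hy⟩)

theorem afr_isOpen (l n p : ℕ) (hl : 0 < l) (hn : 0 < n) (hp : 0 < p) :
    IsOpen {T : Fin p → Matrix (Fin l) (Fin n) ℝ | IsAFR T} := by
  classical
  set S : Set (Fin p → ℝ) := Metric.sphere (0 : Fin p → ℝ) 1 with hS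
  have hKS : IsCompact S := isCompact_sphere _ _
  set M : (Fin p → Matrix (Fin l) (Fin n) ℝ) × (Fin p → ℝ) → Matrix (Fin l) (Fin n) ℝ :=
    fun Tx => ∑ k, Tx.2 k • Tx.1 k with hM
  have hMcont : Continuous M := by
    apply continuous_finset_sum
    intro k _
    exact ((continuous_apply k).comp continuous_snd).smul
      ((continuous_apply k).comp continuous_fst)
  set f : (Fin p → Matrix (Fin l) (Fin n) ℝ) × (Fin p → ℝ) → ℝ :=
    fun Tx => ((M Tx)ᵀ * M Tx).det with hf
  have hfcont : Continuous f := (hMcont.matrix_transpose.matrix_mul hMcont).matrix_det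
  have hset : {T : Fin p → Matrix (Fin l) (Fin n) ℝ | IsAFR T} =
      {T | ∀ x ∈ S, f (T, x) ≠ 0} := by
    ext T
    constructor
    · intro hT x hx
      have hxne : x ≠ 0 := by
        intro h0
        rw [hS] at hx
        simp [h0] at hx
      have := hT x hxne
      rw [Fintype.card_fin] at this
      exact (rank_eq_iff_det_ne_zero _).1 this
    · intro hT x hxne
      have hxnorm : ‖x‖ ≠ 0 := norm_ne_zero_iff.2 hxne
      set y : Fin p → ℝ := ‖x‖⁻¹ • x with hy
      have hyS : y ∈ S := by
        rw [hS]
        simp only [Metric.mem_sphere, dist_zero_right, hy, norm_smul, norm_inv, norm_norm]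
        field_simp
      have hfy := hT y hyS
      have hrank : (∑ k, y k • T k).rank = n := (rank_eq_iff_det_ne_zero _).2 hfy
      have hsum : (∑ k, y k • T k) = ‖x‖⁻¹ • ∑ k, x k • T k := by
        rw [Finset.smul_sum]
        refine Finset.sum_congr rfl fun k _ => ?_
        rw [hy]
        simp [smul_smul, Pi.smul_apply]
      rw [hsum, rank_smul_eq _ (inv_ne_zero hxnorm)] at hrank
      rw [Fintype.card_fin]
      exact hrank
  rw [hset]
  exact isOpen_forall_ne hKS hfcont
end

section
/- Let A = [[0,1],[-1,0]], P = [[0,1],[1,0]], Q = [[1,0],[0,-1]]. Then the seven matrices {E₂⊗A⊗E₂, E₂⊗P⊗A, Q⊗Q⊗A, P⊗Q⊗A, A⊗P⊗Q, A⊗P⊗P, A⊗Q⊗E₂} form a Hurwitz–Radon family of order 8. -/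
open Matrix Kronecker BigOperators

/-- A family of square real matrices is a Hurwitz–Radon family if each member is
orthogonal and skew-symmetric, and distinct members anticommute. -/
def IsHRFamily {ι σ : Type*} [Fintype ι] [DecidableEq ι] (A : σ → Matrix ι ι ℝ) : Prop :=
  (∀ i, A i * (A i)ᵀ = 1) ∧ (∀ i, A i = -(A i)ᵀ) ∧
    ∀ i j, i ≠ j → A i * A j = -(A j * A i)

noncomputable def Amat : Matrix (Fin 2) (Fin 2) ℝ := !![0, 1; -1, 0]
noncomputable def Pmat : Matrix (Fin 2) (Fin 2) ℝ := !![0, 1; 1, 0]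
noncomputable def Qmat : Matrix (Fin 2) (Fin 2) ℝ := !![1, 0; 0, -1]

@[simp]
lemma cons_val_five' {α : Type*} {m : ℕ} (x : α) (u : Fin (m+5) → α) :
    Matrix.vecCons x u 5 = Matrix.vecHead (Matrix.vecTail (Matrix.vecTail (Matrix.vecTail (Matrix.vecTail u)))) :=
  rfl

@[simp]
lemma cons_val_six' {α : Type*} {m : ℕ} (x : α) (u : Fin (m+6) → α) :
    Matrix.vecCons x u 6 = Matrix.vecHead (Matrix.vecTail (Matrix.vecTail (Matrix.vecTail (Matrix.vecTail (Matrix.vecTail u))))) :=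
  rfl

section aux

variable {l m n p : Type*}

lemma neg_kron (A : Matrix l m ℝ) (B : Matrix n p ℝ) : (-A) ⊗ₖ B = -(A ⊗ₖ B) := by
  ext ⟨i, k⟩ ⟨j, l⟩; simp [Matrix.kroneckerMap_apply]

lemma kron_neg (A : Matrix l m ℝ) (B : Matrix n p ℝ) : A ⊗ₖ (-B) = -(A ⊗ₖ B) := by
  ext ⟨i, k⟩ ⟨j, l⟩; simp [Matrix.kroneckerMap_apply]

lemma kron_transpose (A : Matrix l m ℝ) (B : Matrix n p ℝ) : (A ⊗ₖ B)ᵀ = Aᵀ ⊗ₖ Bᵀ :=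
  (Matrix.kroneckerMap_transpose _ _ _).symm

end aux

lemma At : Amatᵀ = -Amat := by
  ext i j; fin_cases i <;> fin_cases j <;> simp [Amat]
lemma Pt : Pmatᵀ = Pmat := by
  ext i j; fin_cases i <;> fin_cases j <;> simp [Pmat]
lemma Qt : Qmatᵀ = Qmat := by
  ext i j; fin_cases i <;> fin_cases j <;> simp [Qmat]

lemma AA : Amat * Amat = -1 := by
  ext i j; fin_cases i <;> fin_cases j <;>
    simp [Amat, Matrix.mul_apply, Fin.sum_univ_two, Matrix.one_apply]
lemma PP : Pmat * Pmat = 1 := by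
  ext i j; fin_cases i <;> fin_cases j <;>
    simp [Pmat, Matrix.mul_apply, Fin.sum_univ_two, Matrix.one_apply]
lemma QQ : Qmat * Qmat = 1 := by
  ext i j; fin_cases i <;> fin_cases j <;>
    simp [Qmat, Matrix.mul_apply, Fin.sum_univ_two, Matrix.one_apply]
lemma PA : Pmat * Amat = -(Amat * Pmat) := by
  ext i j; fin_cases i <;> fin_cases j <;>
    simp [Amat, Pmat, Matrix.mul_apply, Fin.sum_univ_two]
lemma QA : Qmat * Amat = -(Amat * Qmat) := by
  ext i j; fin_cases i <;> fin_cases j <;>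
    simp [Amat, Qmat, Matrix.mul_apply, Fin.sum_univ_two]
lemma QP : Qmat * Pmat = -(Pmat * Qmat) := by
  ext i j; fin_cases i <;> fin_cases j <;>
    simp [Pmat, Qmat, Matrix.mul_apply, Fin.sum_univ_two]

theorem hr_family_order_eight :
    IsHRFamily
      (![((1 : Matrix (Fin 2) (Fin 2) ℝ) ⊗ₖ Amat) ⊗ₖ (1 : Matrix (Fin 2) (Fin 2) ℝ),
         ((1 : Matrix (Fin 2) (Fin 2) ℝ) ⊗ₖ Pmat) ⊗ₖ Amat,
         (Qmat ⊗ₖ Qmat) ⊗ₖ Amat,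
         (Pmat ⊗ₖ Qmat) ⊗ₖ Amat,
         (Amat ⊗ₖ Pmat) ⊗ₖ Qmat,
         (Amat ⊗ₖ Pmat) ⊗ₖ Pmat,
         (Amat ⊗ₖ Qmat) ⊗ₖ (1 : Matrix (Fin 2) (Fin 2) ℝ)] :
        Fin 7 → Matrix ((Fin 2 × Fin 2) × Fin 2) ((Fin 2 × Fin 2) × Fin 2) ℝ) := by
  refine ⟨?_, ?_, ?_⟩
  · intro i
    fin_cases i <;>
      simp [kron_transpose, At, Pt, Qt, Matrix.transpose_one, neg_kron, kron_neg,
        ← Matrix.mul_kronecker_mul, AA, PP, QQ, Matrix.one_kronecker_one, Matrix.cons_val_succ, Matrix.cons_val_zero]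
  · intro i
    fin_cases i <;>
      simp [kron_transpose, At, Pt, Qt, Matrix.transpose_one, neg_kron, kron_neg, Matrix.cons_val_succ, Matrix.cons_val_zero]
  · intro i j hij
    fin_cases i <;> fin_cases j <;> simp_all <;>
      simp [← Matrix.mul_kronecker_mul, AA, PP, QQ, PA, QA, QP, neg_kron, kron_neg,
        Matrix.one_kronecker_one, Matrix.cons_val_succ, Matrix.cons_val_zero]
end

section
/- If T = (A₁;…;A_p) is an l×n×p absolutely full column rank real tensor, then for any positive integer u, the ul×un×p tensor (E_u⊗A₁;…;E_u⊗A_p) is absolutely full column rank, where E_u is the u×u identity and ⊗ is the Kronecker product. -/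
open Matrix Kronecker BigOperators

lemma rank_eq_card_iff_injective {ι κ : Type*} [Fintype ι] [Fintype κ]
    (M : Matrix ι κ ℝ) :
    M.rank = Fintype.card κ ↔ Function.Injective M.mulVecLin := by
  rw [← LinearMap.ker_eq_bot]
  constructor
  · intro h
    have h2 := M.mulVecLin.finrank_range_add_finrank_ker
    rw [Matrix.rank] at h
    rw [h, Module.finrank_pi ℝ] at h2
    have : Module.finrank ℝ (LinearMap.ker M.mulVecLin) = 0 := by omega
    exact Submodule.finrank_eq_zero.mp this
  · intro h
    have h2 := M.mulVecLin.finrank_range_add_finrank_ker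
    rw [h, finrank_bot, add_zero, Module.finrank_pi ℝ] at h2
    exact h2

theorem afr_kronecker_identity {l n p : ℕ} (T : Fin p → Matrix (Fin l) (Fin n) ℝ)
    (hT : IsAFR T) (u : ℕ) (hu : 0 < u) :
    IsAFR (fun i => (1 : Matrix (Fin u) (Fin u) ℝ) ⊗ₖ T i) := by
  intro x hx
  have key : (∑ k, x k • ((1 : Matrix (Fin u) (Fin u) ℝ) ⊗ₖ T k))
      = (1 : Matrix (Fin u) (Fin u) ℝ) ⊗ₖ (∑ k, x k • T k) := by
    ext ⟨a, b⟩ ⟨c, d⟩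
    simp only [Matrix.sum_apply, Matrix.smul_apply, Matrix.kroneckerMap_apply,
      smul_eq_mul, Finset.mul_sum, mul_left_comm]
  rw [key, rank_eq_card_iff_injective]
  have hM := hT x hx
  rw [rank_eq_card_iff_injective] at hM
  set M := ∑ k, x k • T k with hMdef
  intro v w hvw
  have hmv : ∀ a : Fin u, M.mulVec (fun d => v (a, d)) = M.mulVec (fun d => w (a, d)) := by
    intro a
    ext b
    have := congrFun hvw (a, b)
    simp only [Matrix.mulVecLin_apply, Matrix.mulVec, dotProduct] at this ⊢
    rw [show (Finset.univ : Finset (Fin u × Fin n)) = Finset.univ ×ˢ Finset.univ from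
      (Finset.univ_product_univ).symm, Finset.sum_product, Finset.sum_product] at this
    simpa [Matrix.kroneckerMap_apply, Matrix.one_apply, Finset.sum_ite_eq',
      mul_comm] using this
  funext ⟨a, d⟩
  have := hM (hmv a)
  exact congrFun this d
end

section
/- Let n ≡ 3 (mod 4), n ≥ 3. Then there exists an (n+1)×n×3 real tensor (C₁; C₂; C₃) that is absolutely full column rank and such that the last row of C₃ is zero. Concretely, with A = [[0,1],[-1,0]], P = [[0,1],[1,0]], E₂ the 2×2 identity, u = (n+1)/4, M₁ = A⊗E₂, M₂ = P⊗A, the tensor whose slices are the first n columns of E_u⊗M₁, E_u⊗M₂, and E_{4u} respectively has this property. -/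
open Matrix Kronecker BigOperators

/-- Reindexing equivalence `Fin u × (Fin 2 × Fin 2) ≃ Fin (n + 1)` when `4 * u = n + 1`. -/
def reIdx (n : ℕ) (hn : n % 4 = 3) :
    Fin ((n + 1) / 4) × (Fin 2 × Fin 2) ≃ Fin (n + 1) :=
  ((Equiv.prodCongr (Equiv.refl (Fin ((n + 1) / 4))) finProdFinEquiv).trans
    finProdFinEquiv).trans (finCongr (by omega))

/-- The quaternion-type identity for the 4×4 building block. -/
lemma keyD (a b c : ℝ) :
    (a • (!![0,1;-1,0] ⊗ₖ (1 : Matrix (Fin 2) (Fin 2) ℝ)) +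
     b • (!![0,1;1,0] ⊗ₖ !![(0:ℝ),1;-1,0]) + c • 1) *
    (a • (!![0,1;-1,0] ⊗ₖ (1 : Matrix (Fin 2) (Fin 2) ℝ)) +
     b • (!![0,1;1,0] ⊗ₖ !![(0:ℝ),1;-1,0]) + c • 1)ᵀ
    = (a^2 + b^2 + c^2) • 1 := by
  ext ⟨i,i'⟩ ⟨j,j'⟩
  fin_cases i <;> fin_cases i' <;> fin_cases j <;> fin_cases j' <;>
    simp [Matrix.mul_apply, Fintype.sum_prod_type, Fin.sum_univ_succ, Matrix.one_apply,
      Prod.ext_iff] <;> ring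

/-- Truncating an invertible matrix to its first `m` columns gives full column rank. -/
lemma rank_trunc {m : ℕ} (S : Matrix (Fin (m+1)) (Fin (m+1)) ℝ) (hS : IsUnit S) :
    (S.submatrix id Fin.castSucc).rank = m := by
  have hinj : Function.Injective (S.submatrix id Fin.castSucc).mulVecLin := by
    rw [← LinearMap.ker_eq_bot, eq_bot_iff]
    intro v hv
    simp only [LinearMap.mem_ker, mulVecLin_apply] at hv
    have hz : S *ᵥ (Fin.snoc v 0) = 0 := by
      funext i
      show ∑ j, S i j * (Fin.snoc v (0:ℝ) : Fin (m+1) → ℝ) j = 0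
      have := congrFun hv i
      simp only [mulVec, dotProduct, submatrix_apply, id_eq] at this
      rw [Fin.sum_univ_castSucc]
      simpa using this
    have h1 : S⁻¹ * S = 1 := nonsing_inv_mul S (S.isUnit_iff_isUnit_det.mp hS)
    have : Fin.snoc v 0 = (0 : Fin (m+1) → ℝ) := by
      have := congrArg (S⁻¹ *ᵥ ·) hz
      simpa [mulVec_mulVec, h1] using this
    simp only [Submodule.mem_bot]
    funext j
    have := congrFun this j.castSucc
    simpa using this
  rw [Matrix.rank, LinearMap.finrank_range_of_inj hinj]
  simp

theorem afr_exists_n_plus_one (n : ℕ) (hn : n % 4 = 3) (hn3 : 3 ≤ n) :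
    ∃ C : Fin 3 → Matrix (Fin (n + 1)) (Fin n) ℝ,
      (C = fun k =>
        ((![(1 : Matrix (Fin ((n + 1) / 4)) (Fin ((n + 1) / 4)) ℝ) ⊗ₖ
              (!![0, 1; -1, 0] ⊗ₖ (1 : Matrix (Fin 2) (Fin 2) ℝ)),
            (1 : Matrix (Fin ((n + 1) / 4)) (Fin ((n + 1) / 4)) ℝ) ⊗ₖ
              (!![0, 1; 1, 0] ⊗ₖ !![0, 1; -1, 0]),
            (1 : Matrix (Fin ((n + 1) / 4) × (Fin 2 × Fin 2))
              (Fin ((n + 1) / 4) × (Fin 2 × Fin 2)) ℝ)] k).submatrix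
          ⇑(reIdx n hn).symm
          (fun c : Fin n => (reIdx n hn).symm c.castSucc))) ∧
      IsAFR C ∧ (∀ j : Fin n, C 2 (Fin.last n) j = 0) := by
  set u := (n + 1) / 4 with hu
  set e := reIdx n hn with he
  set M : Fin 3 → Matrix (Fin u × (Fin 2 × Fin 2)) (Fin u × (Fin 2 × Fin 2)) ℝ :=
    ![(1 : Matrix (Fin u) (Fin u) ℝ) ⊗ₖ (!![0,1;-1,0] ⊗ₖ (1 : Matrix (Fin 2) (Fin 2) ℝ)),
      (1 : Matrix (Fin u) (Fin u) ℝ) ⊗ₖ (!![0,1;1,0] ⊗ₖ !![(0:ℝ),1;-1,0]), 1] with hM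
  refine ⟨fun k => (M k).submatrix ⇑e.symm (fun c : Fin n => e.symm c.castSucc), rfl, ?_, ?_⟩
  · -- AFR
    intro x hx
    -- positivity of the norm square
    have hc : (0:ℝ) < x 0 ^ 2 + x 1 ^ 2 + x 2 ^ 2 := by
      have h3 : x 0 ≠ 0 ∨ x 1 ≠ 0 ∨ x 2 ≠ 0 := by
        by_contra h
        push_neg at h
        exact hx (funext fun i => by fin_cases i <;> simp [h.1, h.2.1, h.2.2])
      rcases h3 with h | h | h <;>
        · have := mul_self_pos.mpr h
          nlinarith [sq_nonneg (x 0), sq_nonneg (x 1), sq_nonneg (x 2)]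
    set c : ℝ := x 0 ^ 2 + x 1 ^ 2 + x 2 ^ 2 with hcdef
    -- the combined slice
    set B : Matrix (Fin u × (Fin 2 × Fin 2)) (Fin u × (Fin 2 × Fin 2)) ℝ := ∑ k, x k • M k with hB
    have hBD : B = (1 : Matrix (Fin u) (Fin u) ℝ) ⊗ₖ
        (x 0 • (!![0,1;-1,0] ⊗ₖ (1 : Matrix (Fin 2) (Fin 2) ℝ)) +
         x 1 • (!![0,1;1,0] ⊗ₖ !![(0:ℝ),1;-1,0]) + x 2 • 1) := by
      rw [hB, Fin.sum_univ_three]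
      simp [hM, kronecker_add, kronecker_smul, Matrix.one_kronecker_one]
    have hBBt : B * Bᵀ = c • 1 := by
      rw [hBD, ← Matrix.kroneckerMap_transpose, transpose_one, ← Matrix.mul_kronecker_mul,
        one_mul, keyD, kronecker_smul, Matrix.one_kronecker_one]
    -- B is a unit
    have hBunit : IsUnit B := by
      have : B * (c⁻¹ • Bᵀ) = 1 := by
        rw [Matrix.mul_smul, hBBt, smul_smul, inv_mul_cancel₀ hc.ne', one_smul]
      letI := invertibleOfRightInverse _ _ this
      exact isUnit_of_invertible B
    -- the reindexed matrix
    have hSunit : IsUnit (B.submatrix ⇑e.symm ⇑e.symm) := by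
      have : B * (c⁻¹ • Bᵀ) = 1 := by
        rw [Matrix.mul_smul, hBBt, smul_smul, inv_mul_cancel₀ hc.ne', one_smul]
      have hmul : (B.submatrix ⇑e.symm ⇑e.symm) * ((c⁻¹ • Bᵀ).submatrix ⇑e.symm ⇑e.symm) = 1 := by
        rw [Matrix.submatrix_mul_equiv, this, Matrix.submatrix_one_equiv]
      letI := invertibleOfRightInverse _ _ hmul
      exact isUnit_of_invertible _
    -- sum of scaled submatrices equals submatrix of B
    have hsum : ∑ k, x k • (M k).submatrix ⇑e.symm (fun c : Fin n => e.symm c.castSucc)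
        = (B.submatrix ⇑e.symm ⇑e.symm).submatrix id Fin.castSucc := by
      ext i j
      simp [hB, Matrix.sum_apply]
    rw [hsum, rank_trunc _ hSunit, Fintype.card_fin]
  · -- last row of C 2 is zero
    intro j
    have hM2 : M 2 = 1 := rfl
    simp only [Matrix.submatrix_apply, hM2, Matrix.one_apply]
    rw [if_neg]
    exact fun h => (Fin.castSucc_lt_last j).ne' (e.symm.injective h)
end
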